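/- If A ∈ Mat_d(ℤ) is a dilation matrix, i.e. every complex eigenvalue λ of A satisfies |λ| > 1, then the intersection over all n ∈ ℕ of the subgroups A^n(ℤ^d) of ℤ^d equals {0}. -/

import Mathlib

open Matrix Polynomial Filter

attribute [local instance] Matrix.linftyOpNormedRing Matrix.linftyOpNormedAlgebra

lemma aux_eval_charpoly {n : Type*} [Fintype n] [DecidableEq n] {R : Type*} [CommRing R]
    (M : Matrix n n R) (μ : R) :
    M.charpoly.eval μ = (Matrix.scalar n μ - M).det := by
  rw [Matrix.charpoly, eval_det, matPolyEquiv_charmatrix]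
  simp

lemma aux_mem_spectrum_iff_isRoot {n : Type*} [Fintype n] [DecidableEq n] {K : Type*} [Field K]
    (M : Matrix n n K) (μ : K) :
    μ ∈ spectrum K M ↔ M.charpoly.IsRoot μ := by
  rw [spectrum.mem_iff, Polynomial.IsRoot, aux_eval_charpoly,
    Matrix.isUnit_iff_isUnit_det, isUnit_iff_ne_zero, not_ne_iff]
  have : (algebraMap K (Matrix n n K)) μ = Matrix.scalar n μ := by
    rw [Matrix.algebraMap_eq_diagonal]; rfl
  rw [this]

theorem iInter_image_pow_dilation_eq_zero (d : ℕ) (hd : 1 ≤ d)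
    (A : Matrix (Fin d) (Fin d) ℤ)
    (hA : ∀ μ : ℂ, (A.map (Int.cast : ℤ → ℂ)).charpoly.IsRoot μ →
      1 < ‖μ‖) :
    (⋂ n : ℕ, Set.range (fun v : Fin d → ℤ => (A ^ n).mulVec v)) = {0} := by
  haveI : NeZero d := ⟨by omega⟩
  set B : Matrix (Fin d) (Fin d) ℂ := A.map (Int.cast : ℤ → ℂ) with hBdef
  -- B is invertible
  have hdet : IsUnit B := by
    rw [Matrix.isUnit_iff_isUnit_det, isUnit_iff_ne_zero]
    intro h0
    have hr : B.charpoly.IsRoot 0 := by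
      rw [Polynomial.IsRoot, aux_eval_charpoly]
      simp [Matrix.det_neg, h0]
    have := hA 0 hr
    rw [norm_zero] at this
    exact absurd this (by norm_num)
  obtain ⟨u, hu⟩ := hdet
  set Cm : Matrix (Fin d) (Fin d) ℂ := ((u⁻¹ : (Matrix (Fin d) (Fin d) ℂ)ˣ) : Matrix (Fin d) (Fin d) ℂ) with hCm
  haveI : CompleteSpace (Matrix (Fin d) (Fin d) ℂ) := FiniteDimensional.complete ℂ _
  have hCspec : ∀ z ∈ spectrum ℂ Cm, ‖z‖₊ < 1 := by
    intro z hz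
    have hz0 : z ≠ 0 := by
      intro h; rw [h] at hz
      exact spectrum.zero_notMem ℂ (u⁻¹).isUnit hz
    have hmem : ((Units.mk0 z hz0 : ℂˣ) : ℂ) ∈ spectrum ℂ ((u⁻¹ : (Matrix (Fin d) (Fin d) ℂ)ˣ) : Matrix (Fin d) (Fin d) ℂ) := hz
    rw [spectrum.inv_mem_iff, inv_inv] at hmem
    have hroot : B.charpoly.IsRoot z⁻¹ := by
      rw [← aux_mem_spectrum_iff_isRoot, ← hu]
      simpa using hmem
    have h1 := hA _ hroot
    rw [norm_inv] at h1
    have hzpos : 0 < ‖z‖ := norm_pos_iff.mpr hz0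
    have hlt : ‖z‖ < 1 := by
      by_contra hcon
      push_neg at hcon
      have : ‖z‖⁻¹ ≤ 1 := by
        rw [inv_le_one_iff₀]; right; exact hcon
      linarith
    exact_mod_cast hlt
  have hρ : spectralRadius ℂ Cm < 1 := by
    have := spectrum.spectralRadius_lt_of_forall_lt (a := Cm) (r := 1) hCspec
    simpa using this
  obtain ⟨t, ht1, ht2⟩ := exists_between hρ
  have hg := spectrum.pow_nnnorm_pow_one_div_tendsto_nhds_spectralRadius Cm
  have hev : ∀ᶠ n : ℕ in atTop, (‖Cm ^ n‖₊ : ENNReal) ^ (1 / (n:ℝ)) < t :=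
    hg.eventually_lt_const ht1
  have hle : ∀ᶠ n : ℕ in atTop, (‖Cm ^ n‖₊ : ENNReal) ≤ t ^ n := by
    filter_upwards [hev, eventually_ge_atTop 1] with n hn hn1
    have hn0 : (n:ℝ) ≠ 0 := by
      have : (1:ℝ) ≤ (n:ℝ) := by exact_mod_cast hn1
      linarith
    calc (‖Cm ^ n‖₊ : ENNReal) = ((‖Cm ^ n‖₊ : ENNReal) ^ (1/(n:ℝ))) ^ (n:ℝ) := by
          rw [← ENNReal.rpow_mul, one_div, inv_mul_cancel₀ hn0, ENNReal.rpow_one]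
      _ ≤ t ^ (n:ℝ) := ENNReal.rpow_le_rpow hn.le (by positivity)
      _ = t ^ n := by rw [ENNReal.rpow_natCast]
  have htend : Tendsto (fun n : ℕ => (‖Cm ^ n‖₊ : ENNReal)) atTop (nhds 0) :=
    tendsto_of_tendsto_of_tendsto_of_le_of_le' tendsto_const_nhds
      (ENNReal.tendsto_pow_atTop_nhds_zero_of_lt_one ht2)
      (Filter.Eventually.of_forall fun n => zero_le) hle
  ext v
  simp only [Set.mem_iInter, Set.mem_range, Set.mem_singleton_iff]
  constructor
  · intro hv
    set vC : Fin d → ℂ := fun i => ((v i : ℤ) : ℂ) with hvC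
    have hvecbound : Tendsto (fun n : ℕ => (‖Cm ^ n *ᵥ vC‖₊ : ENNReal)) atTop (nhds 0) := by
      have hmul : Tendsto (fun n : ℕ => (‖Cm ^ n‖₊ : ENNReal) * (‖vC‖₊ : ENNReal)) atTop (nhds 0) := by
        have := ENNReal.Tendsto.mul_const htend (Or.inr (ENNReal.coe_ne_top (r := ‖vC‖₊)))
        simpa using this
      refine tendsto_of_tendsto_of_tendsto_of_le_of_le tendsto_const_nhds hmul
        (fun n => zero_le) (fun n => ?_)
      rw [← ENNReal.coe_mul]
      exact ENNReal.coe_le_coe.mpr (Matrix.linfty_opNNNorm_mulVec (Cm ^ n) vC)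
    have hev2 : ∀ᶠ n : ℕ in atTop, (‖Cm ^ n *ᵥ vC‖₊ : ENNReal) < 1 :=
      hvecbound.eventually_lt_const (by norm_num)
    obtain ⟨n, hn⟩ := hev2.exists
    obtain ⟨w, hw⟩ := hv n
    have hmp : (A ^ n).map (Int.cast : ℤ → ℂ) = B ^ n := by
      exact (map_pow ((Int.castRingHom ℂ).mapMatrix) A n : _)
    have h1 : B ^ n *ᵥ (fun i => ((w i : ℤ) : ℂ)) = vC := by
      funext i
      rw [← hmp]
      have h3 := (RingHom.map_mulVec (Int.castRingHom ℂ) (A ^ n) w i).symm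
      simp only [Int.coe_castRingHom] at h3 ⊢
      calc ((A ^ n).map (Int.cast : ℤ → ℂ) *ᵥ fun i => ((w i : ℤ) : ℂ)) i
          = ((A ^ n).map (Int.cast : ℤ → ℂ) *ᵥ (Int.cast ∘ w)) i := rfl
        _ = (((A ^ n) *ᵥ w) i : ℂ) := h3
        _ = vC i := by rw [hw]
    have hCB : Cm ^ n * B ^ n = 1 := by
      rw [hCm, ← hu, ← Units.val_pow_eq_pow_val, ← Units.val_pow_eq_pow_val, ← Units.val_mul,
        inv_pow, inv_mul_cancel, Units.val_one]
    have h2 : Cm ^ n *ᵥ vC = fun i => ((w i : ℤ) : ℂ) := by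
      rw [← h1, Matrix.mulVec_mulVec, hCB, Matrix.one_mulVec]
    have hw0 : w = 0 := by
      funext i
      have hentry : ‖((w i : ℤ) : ℂ)‖₊ ≤ ‖Cm ^ n *ᵥ vC‖₊ := by
        rw [h2]
        exact nnnorm_le_pi_nnnorm (fun i => ((w i : ℤ) : ℂ)) i
      have h3 : (‖((w i : ℤ) : ℂ)‖₊ : ENNReal) < 1 :=
        lt_of_le_of_lt (ENNReal.coe_le_coe.mpr hentry) hn
      have h4 : ‖((w i : ℤ) : ℂ)‖₊ < 1 := by exact_mod_cast h3
      have h4' : ‖((w i : ℤ) : ℂ)‖ < 1 := by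
        have := NNReal.coe_lt_coe.mpr h4
        rwa [coe_nnnorm, NNReal.coe_one] at this
      rw [Complex.norm_intCast, ← Int.cast_abs,
        show ((1:ℝ) = ((1:ℤ):ℝ)) from by norm_num, Int.cast_lt] at h4'
      have h6 : |w i| < 1 := h4'
      simpa using Int.abs_lt_one_iff.mp h6
    rw [← hw, hw0, Matrix.mulVec_zero]
  · rintro rfl
    exact fun n => ⟨0, Matrix.mulVec_zero _⟩
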